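/- For every k > 0, (√k/π) ∫₀^{π/4} dx/√(k + sec(x)²) = (1/(2π)) · arcsec(k+1), i.e. the integral ∫₀^{π/4} dx/√(k + sec(x)²) equals arccos(1/(k+1))/(2√k). -/

import Mathlib

open Real MeasureTheory

private lemma aux2 (a : ℝ) (ha : 0 ≤ a) : (1 / Real.sqrt a) ^ 2 = 1 / a := by
  rw [div_pow, one_pow, Real.sq_sqrt ha]

private lemma aux (a b d : ℝ) (ha : 0 ≤ a) (hd : 0 ≤ d) :
    (1 / Real.sqrt a * b / Real.sqrt d) ^ 2 = b ^ 2 / (a * d) := by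
  rw [div_pow, mul_pow, div_pow, one_pow, Real.sq_sqrt ha, Real.sq_sqrt hd]
  ring

/-- For every `k > 0`,
`(√k/π) ∫₀^{π/4} dx/√(k + sec(x)²) = (1/(2π)) · arcsec(k+1)`,
i.e. `∫₀^{π/4} dx/√(k + (1/cos x)²) = arccos(1/(k+1)) / (2√k)`. -/
theorem stmt0 (k : ℝ) (hk : 0 < k) :
    ∫ x in (0:ℝ)..(π/4), 1 / Real.sqrt (k + (1 / Real.cos x)^2)
      = Real.arccos (1/(k+1)) / (2 * Real.sqrt k) := by
  have hk1 : (0:ℝ) < k + 1 := by linarith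
  have hdk : 0 < k / (k+1) := div_pos hk hk1
  set c : ℝ := Real.sqrt (k / (k+1)) with hc
  have hc0 : 0 < c := Real.sqrt_pos.mpr hdk
  have hc2 : c ^ 2 = k / (k+1) := Real.sq_sqrt hdk.le
  have hclt : c < 1 := by
    have h : c ^ 2 < 1 := by
      rw [hc2]; exact (div_lt_one hk1).mpr (by linarith)
    nlinarith
  have hks : 0 < Real.sqrt k := Real.sqrt_pos.mpr hk
  -- cos positivity on the interval
  have hIcc : Set.uIcc (0:ℝ) (π/4) = Set.Icc 0 (π/4) :=
    Set.uIcc_of_le (by positivity)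
  have hcos : ∀ x ∈ Set.uIcc (0:ℝ) (π/4), 0 < Real.cos x := by
    intro x hx
    rw [hIcc] at hx
    apply Real.cos_pos_of_mem_Ioo
    constructor
    · linarith [hx.1, Real.pi_pos]
    · linarith [hx.2, Real.pi_pos]
  -- derivative of F
  have hderiv : ∀ x ∈ Set.uIcc (0:ℝ) (π/4),
      HasDerivAt (fun y => Real.arcsin (c * Real.sin y) / Real.sqrt k)
        (1 / Real.sqrt (k + (1 / Real.cos x)^2)) x := by
    intro x hx
    have hco := hcos x hx
    have habs : |c * Real.sin x| < 1 := by
      calc |c * Real.sin x| = c * |Real.sin x| := by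
            rw [abs_mul, abs_of_pos hc0]
        _ ≤ c * 1 := by
            exact mul_le_mul_of_nonneg_left (Real.abs_sin_le_one x) hc0.le
        _ < 1 := by linarith
    have h1 : -1 < c * Real.sin x := by
      have := abs_lt.mp habs; linarith [this.1]
    have h2 : c * Real.sin x < 1 := (abs_lt.mp habs).2
    have hD : HasDerivAt (fun y => Real.arcsin (c * Real.sin y))
        ((1 / Real.sqrt (1 - (c * Real.sin x) ^ 2)) * (c * Real.cos x)) x :=
      by have := (Real.hasDerivAt_arcsin h1.ne' h2.ne).comp x
            ((Real.hasDerivAt_sin x).const_mul c)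
         exact this
    have hD2 := hD.div_const (Real.sqrt k)
    refine hD2.congr_deriv (Eq.symm ?_)
    -- show equality of derivative values
    have hX : 0 < 1 - (c * Real.sin x) ^ 2 := by nlinarith
    have hY : 0 < k + (1 / Real.cos x) ^ 2 := by positivity
    have hXs : 0 < Real.sqrt (1 - (c * Real.sin x) ^ 2) := Real.sqrt_pos.mpr hX
    have hYs : 0 < Real.sqrt (k + (1 / Real.cos x) ^ 2) := Real.sqrt_pos.mpr hY
    have hL : 0 ≤ 1 / Real.sqrt (k + (1 / Real.cos x)^2) := by positivity
    have hR : 0 ≤ (1 / Real.sqrt (1 - (c * Real.sin x) ^ 2)) * (c * Real.cos x) / Real.sqrt k := by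
      positivity
    have hsq : (1 / Real.sqrt (k + (1 / Real.cos x)^2)) ^ 2
        = ((1 / Real.sqrt (1 - (c * Real.sin x) ^ 2)) * (c * Real.cos x) / Real.sqrt k) ^ 2 := by
      rw [aux2 _ hY.le, aux _ _ _ hX.le hk.le]
      have hsc : Real.sin x ^ 2 = 1 - Real.cos x ^ 2 := by
        linarith [Real.sin_sq_add_cos_sq x]
      rw [mul_pow, mul_pow, hc2, hsc]
      have hco2 : 0 < Real.cos x ^ 2 := by positivity
      have hdlt : k / (k+1) < 1 := (div_lt_one hk1).mpr (by linarith)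
      have h1co : 0 ≤ 1 - Real.cos x ^ 2 := by
        nlinarith [Real.sin_sq_add_cos_sq x, sq_nonneg (Real.sin x)]
      have hC : 0 < (1 - k / (k+1) * (1 - Real.cos x ^ 2)) * k := by
        apply mul_pos _ hk
        nlinarith [mul_nonneg (sub_nonneg.mpr hdlt.le) h1co]
      rw [div_eq_div_iff hY.ne' hC.ne']
      field_simp
      ring
    calc (1 / Real.sqrt (k + (1 / Real.cos x)^2))
        = Real.sqrt ((1 / Real.sqrt (k + (1 / Real.cos x)^2)) ^ 2) :=
          (Real.sqrt_sq hL).symm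
      _ = Real.sqrt (((1 / Real.sqrt (1 - (c * Real.sin x) ^ 2)) * (c * Real.cos x) / Real.sqrt k) ^ 2) := by
          rw [hsq]
      _ = _ := Real.sqrt_sq hR
  -- integrability
  have hint : IntervalIntegrable (fun x => 1 / Real.sqrt (k + (1 / Real.cos x)^2))
      MeasureTheory.volume 0 (π/4) := by
    apply ContinuousOn.intervalIntegrable
    apply ContinuousOn.div continuousOn_const
    · exact Real.continuous_sqrt.comp_continuousOn
        (continuousOn_const.add
          ((continuousOn_const.div Real.continuous_cos.continuousOn
            (fun x hx => (hcos x hx).ne')).pow 2))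
    · intro x hx
      have : 0 < k + (1 / Real.cos x) ^ 2 := by positivity
      exact (Real.sqrt_pos.mpr this).ne'
  rw [intervalIntegral.integral_eq_sub_of_hasDerivAt hderiv hint]
  simp only [Real.sin_pi_div_four, Real.sin_zero, mul_zero, Real.arcsin_zero, zero_div, sub_zero]
  -- final identity
  set θ : ℝ := Real.arcsin (c * (Real.sqrt 2 / 2)) with hθ
  have hs2 : Real.sqrt 2 / 2 < 1 := by
    nlinarith [Real.sq_sqrt (by norm_num : (2:ℝ) ≥ 0), Real.sqrt_nonneg 2]
  have harg0 : 0 ≤ c * (Real.sqrt 2 / 2) := by positivity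
  have harg1 : c * (Real.sqrt 2 / 2) ≤ 1 := by nlinarith
  have hθ0 : 0 ≤ θ := Real.arcsin_nonneg.mpr harg0
  have hθpi : θ ≤ π / 2 := Real.arcsin_le_pi_div_two _
  have hsinθ : Real.sin θ = c * (Real.sqrt 2 / 2) := Real.sin_arcsin (by linarith) harg1
  have hcos2θ : Real.cos (2 * θ) = 1 / (k + 1) := by
    rw [Real.cos_two_mul]
    have hcs : Real.cos θ ^ 2 = 1 - Real.sin θ ^ 2 := by
      linarith [Real.sin_sq_add_cos_sq θ]
    rw [hcs, hsinθ, mul_pow, hc2, div_pow, Real.sq_sqrt (by norm_num : (0:ℝ) ≤ 2)]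
    field_simp
    ring
  have harc : Real.arccos (1 / (k + 1)) = 2 * θ := by
    rw [← hcos2θ, Real.arccos_cos (by linarith) (by linarith)]
  rw [harc]
  rw [mul_comm (2:ℝ) (Real.sqrt k), mul_comm (2:ℝ) θ, mul_div_mul_right _ _ (two_ne_zero)]
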